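/- Let n and m be positive integers, e = gcd(n,m), Γ the closed segment in ℝ² from (m,0) to (0,n), and Δ the closed triangle with vertices (0,0), (m,0), (0,n). Then there exists a lattice point A₁ ∈ (Δ ∩ ℤ²) \setminus Γ such that the triangle T = conv{(m,0), (0,n), A₁} satisfies T ∩ ℤ² = (Γ ∩ ℤ²) ∪ {A₁}; moreover T is the image of the triangle conv{(0,0), (e,0), (0,1)} under an affine map v ↦ Mv + w with M an integer 2×2 matrix of determinant ±1 and w ∈ ℤ². -/

import Mathlib

noncomputable section

/-- Embedding of an integral point into the real plane. -/
def latticeEmb (p : ℤ × ℤ) : ℝ × ℝ := ((p.1 : ℝ), (p.2 : ℝ))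

open Set

lemma mem_convexHull_triple {P1 P2 P3 p : ℝ × ℝ} :
    p ∈ convexHull ℝ ({P1, P2, P3} : Set (ℝ × ℝ)) ↔
    ∃ c1 c2 c3 : ℝ, 0 ≤ c1 ∧ 0 ≤ c2 ∧ 0 ≤ c3 ∧ c1 + c2 + c3 = 1 ∧
      c1 • P1 + c2 • P2 + c3 • P3 = p := by
  rw [convexHull_insert ⟨P2, by simp⟩, convexHull_pair, mem_convexJoin]
  constructor
  · rintro ⟨x, hx, z, ⟨u, v, hu, hv, huv, rfl⟩, s, t, hs, ht, hst, rfl⟩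
    rw [mem_singleton_iff] at hx; subst hx
    refine ⟨s, t * u, t * v, hs, by positivity, by positivity, by nlinarith, ?_⟩
    simp [smul_smul, smul_add]
    module
  · rintro ⟨c1, c2, c3, h1, h2, h3, hsum, rfl⟩
    rcases eq_or_lt_of_le (by linarith : (0:ℝ) ≤ c2 + c3) with h | h
    · have hc2 : c2 = 0 := by linarith
      have hc3 : c3 = 0 := by linarith
      have hc1 : c1 = 1 := by linarith
      refine ⟨P1, mem_singleton _, P2, ⟨1, 0, by norm_num⟩, 1, 0, by norm_num, ?_⟩
      simp [hc2, hc3, hc1]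
    · refine ⟨P1, mem_singleton _, (c2/(c2+c3)) • P2 + (c3/(c2+c3)) • P3,
        ⟨c2/(c2+c3), c3/(c2+c3), by positivity, by positivity, by field_simp, rfl⟩,
        c1, c2+c3, h1, le_of_lt h, by linarith, ?_⟩
      rw [smul_add, smul_smul, smul_smul]
      rw [mul_div_cancel₀ _ (ne_of_gt h), mul_div_cancel₀ _ (ne_of_gt h), add_assoc]

/-- An explicit affine self-map of the plane. -/
def affPlane (α β γ δ w1 w2 : ℝ) : (ℝ × ℝ) →ᵃ[ℝ] (ℝ × ℝ) where
  toFun := fun v => (α * v.1 + β * v.2 + w1, γ * v.1 + δ * v.2 + w2)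
  linear :=
    { toFun := fun v => (α * v.1 + β * v.2, γ * v.1 + δ * v.2)
      map_add' := by intro x y; ext <;> simp <;> ring
      map_smul' := by intro c x; ext <;> simp <;> ring }
  map_vadd' := by
    intro p v
    ext <;> simp [Prod.ext_iff] <;> ring


/-- for the Newton diagram `Δ` with vertices (0,0), (m,0), (0,n) and compact edge
`Γ = [(m,0),(0,n)]` of integral length `e = gcd(n,m)`, there exists a lattice point `A₁` of
`Δ \ Γ` such that the triangle `T = conv{(m,0),(0,n),A₁}` contains no lattice points besides
`A₁` and those of `Γ`, and `T` is the image of `conv{(0,0),(e,0),(0,1)}` by an affine map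
`v ↦ Mv + w` with `M` an integral matrix of determinant ±1 and `w ∈ ℤ²`. -/
theorem exists_closest_lattice_point_triangle
    (n m : ℕ) (hn : 0 < n) (hm : 0 < m) (e : ℕ) (he : e = Nat.gcd n m)
    (Γ : Set (ℝ × ℝ)) (hΓ : Γ = segment ℝ ((m : ℝ), (0 : ℝ)) ((0 : ℝ), (n : ℝ)))
    (Δ : Set (ℝ × ℝ))
    (hΔ : Δ = convexHull ℝ {((0 : ℝ), (0 : ℝ)), ((m : ℝ), (0 : ℝ)), ((0 : ℝ), (n : ℝ))}) :
    ∃ (A₁ : ℤ × ℤ) (T : Set (ℝ × ℝ)),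
      latticeEmb A₁ ∈ Δ \ Γ ∧
      T = convexHull ℝ {((m : ℝ), (0 : ℝ)), ((0 : ℝ), (n : ℝ)), latticeEmb A₁} ∧
      {p : ℤ × ℤ | latticeEmb p ∈ T} = {p : ℤ × ℤ | latticeEmb p ∈ Γ} ∪ {A₁} ∧
      ∃ (M : Matrix (Fin 2) (Fin 2) ℤ) (w : ℤ × ℤ),
        (M.det = 1 ∨ M.det = -1) ∧
        T = (fun v : ℝ × ℝ =>
              (((M 0 0 : ℝ) * v.1 + (M 0 1 : ℝ) * v.2 + (w.1 : ℝ)),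
               ((M 1 0 : ℝ) * v.1 + (M 1 1 : ℝ) * v.2 + (w.2 : ℝ)))) ''
            convexHull ℝ {((0 : ℝ), (0 : ℝ)), ((e : ℝ), (0 : ℝ)), ((0 : ℝ), (1 : ℝ))} := by
  subst hΓ hΔ
  -- arithmetic setup
  have hepos : 0 < e := he ▸ Nat.gcd_pos_of_pos_left m hn
  set n' : ℕ := n / e with hn'def
  set m' : ℕ := m / e with hm'def
  have hn'e : n' * e = n := Nat.div_mul_cancel (he ▸ Nat.gcd_dvd_left n m)
  have hm'e : m' * e = m := Nat.div_mul_cancel (he ▸ Nat.gcd_dvd_right n m)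
  have hcop : Nat.Coprime n' m' := by
    rw [hn'def, hm'def, he]; exact Nat.coprime_div_gcd_div_gcd (he ▸ hepos)
  have hn'pos : 0 < n' :=
    Nat.div_pos (Nat.le_of_dvd hn (he ▸ Nat.gcd_dvd_left n m)) hepos
  have hm'pos : 0 < m' :=
    Nat.div_pos (Nat.le_of_dvd hm (he ▸ Nat.gcd_dvd_right n m)) hepos
  -- integer level
  set N' : ℤ := (n' : ℤ) with hN'
  set M' : ℤ := (m' : ℤ) with hM'
  set E : ℤ := (e : ℤ) with hE
  have hM'pos : 0 < M' := by rw [hM']; exact_mod_cast hm'pos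
  have hN'pos : 0 < N' := by rw [hN']; exact_mod_cast hn'pos
  have hEpos : 0 < E := by rw [hE]; exact_mod_cast hepos
  have bezout : N' * Nat.gcdA n' m' + M' * Nat.gcdB n' m' = 1 := by
    have := Nat.gcd_eq_gcd_ab n' m'
    rw [hcop] at this
    exact_mod_cast this.symm
  set u : ℤ := Nat.gcdA n' m' with hu
  set v : ℤ := Nat.gcdB n' m' with hv
  set q : ℤ := (-u) / M' with hq
  set a : ℤ := -u - M' * q with ha
  set b : ℤ := N' * E - v + N' * q with hb
  have ha_mod : a = (-u) % M' := by rw [ha, hq, Int.emod_def]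
  have ha0 : 0 ≤ a := by rw [ha_mod]; exact Int.emod_nonneg _ (ne_of_gt hM'pos)
  have haM : a < M' := by rw [ha_mod]; exact Int.emod_lt_of_pos _ hM'pos
  have key : N' * a + M' * b = N' * M' * E - 1 := by
    rw [ha, hb]; linear_combination (-1 : ℤ) * bezout
  have hb0 : 0 ≤ b := by
    have ha1 : N' * a ≤ N' * (M' - 1) :=
      mul_le_mul_of_nonneg_left (by linarith) (le_of_lt hN'pos)
    have ha2 : N' * M' ≤ N' * M' * E :=
      le_mul_of_one_le_right (by positivity) (by linarith)
    have h1 : 0 ≤ M' * b := by nlinarith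
    exact le_of_mul_le_mul_left (by simpa using h1) hM'pos
  -- real level
  have hmr : (m : ℝ) = (m' : ℝ) * e := by exact_mod_cast hm'e.symm
  have hnr : (n : ℝ) = (n' : ℝ) * e := by exact_mod_cast hn'e.symm
  have keyR : (n' : ℝ) * a + (m' : ℝ) * b = (n' : ℝ) * m' * e - 1 := by
    have := congrArg (Int.cast : ℤ → ℝ) key
    push_cast at this
    convert this using 2 <;> push_cast [hN', hM', hE] <;> ring
  have hnm_ab : (n : ℝ) * a + (m : ℝ) * b = (n : ℝ) * m - e := by
    rw [hnr, hmr]; linear_combination (e : ℝ) * keyR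
  have hmR : (0 : ℝ) < m := by exact_mod_cast hm
  have hnR : (0 : ℝ) < n := by exact_mod_cast hn
  have heR : (1 : ℝ) ≤ e := by exact_mod_cast hepos
  have ha0R : (0 : ℝ) ≤ (a : ℝ) := by exact_mod_cast ha0
  have hb0R : (0 : ℝ) ≤ (b : ℝ) := by exact_mod_cast hb0
  refine ⟨(a, b), convexHull ℝ {((m : ℝ), (0 : ℝ)), ((0 : ℝ), (n : ℝ)), latticeEmb (a, b)},
    ⟨?_, ?_⟩, rfl, ?_, ?_⟩
  · -- in Δ
    rw [mem_convexHull_triple]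
    refine ⟨(e : ℝ) / (m * n), (a : ℝ) / m, (b : ℝ) / n, by positivity, by positivity,
      by positivity, ?_, ?_⟩
    · field_simp
      linear_combination hnm_ab
    · show ((e : ℝ) / (m * n)) • ((0:ℝ), (0:ℝ)) + ((a : ℝ) / m) • ((m:ℝ), (0:ℝ))
        + ((b : ℝ) / n) • ((0:ℝ), (n:ℝ)) = latticeEmb (a, b)
      simp only [latticeEmb, Prod.smul_mk, smul_eq_mul, Prod.mk_add_mk, mul_zero]
      rw [Prod.ext_iff]
      constructor
      · simp; field_simp
      · simp; field_simp
  · -- not in Γ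
    rintro ⟨s, t, hs, ht, hst, hcomb⟩
    rw [Prod.ext_iff] at hcomb
    simp only [latticeEmb, Prod.smul_mk, smul_eq_mul, Prod.mk_add_mk, mul_zero,
      add_zero, zero_add, smul_zero] at hcomb
    obtain ⟨h1, h2⟩ := hcomb
    have h3 : (n : ℝ) * a + (m : ℝ) * b = (n : ℝ) * m := by
      linear_combination (-(n : ℝ)) * h1 + (-(m : ℝ)) * h2 + ((n : ℝ) * m) * hst
    linarith [hnm_ab]
  · -- lattice points of T
    ext p
    simp only [Set.mem_setOf_eq, Set.mem_union, Set.mem_singleton_iff]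
    constructor
    · intro hp
      rw [mem_convexHull_triple] at hp
      obtain ⟨c1, c2, c3, hc1, hc2, hc3, hsum, hcomb⟩ := hp
      rw [Prod.ext_iff] at hcomb
      simp only [latticeEmb, Prod.smul_mk, smul_eq_mul, Prod.mk_add_mk, mul_zero,
        add_zero, zero_add, smul_zero] at hcomb
      obtain ⟨h1, h2⟩ := hcomb
      have hc3eq : c3 = (n' : ℝ) * m' * e - ((n' : ℝ) * p.1 + (m' : ℝ) * p.2) := by
        linear_combination (-(n' : ℝ)) * h1 - (m' : ℝ) * h2 + c3 * keyR
          + ((n' : ℝ) * m' * e) * hsum + ((n' : ℝ) * c1) * hmr + ((m' : ℝ) * c2) * hnr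
      set k : ℤ := N' * M' * E - (N' * p.1 + M' * p.2) with hk
      have hkR : (k : ℝ) = c3 := by
        rw [hk, hc3eq]; push_cast [hN', hM', hE]; ring
      have hc3le : c3 ≤ 1 := by linarith
      have hk0 : 0 ≤ k := by exact_mod_cast hkR ▸ hc3
      have hk1 : k ≤ 1 := by exact_mod_cast hkR ▸ hc3le
      rcases (by omega : k = 0 ∨ k = 1) with h | h
      · -- on Γ
        left
        have hc3z : c3 = 0 := by rw [← hkR, h]; norm_num
        rw [hc3z, zero_mul, add_zero] at h1 h2
        refine ⟨c1, c2, hc1, hc2, by linarith, ?_⟩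
        rw [Prod.ext_iff]
        simp only [latticeEmb, Prod.smul_mk, smul_eq_mul, Prod.mk_add_mk, mul_zero,
          add_zero, zero_add, smul_zero]
        exact ⟨h1, h2⟩
      · -- equals A₁
        right
        have hc3o : c3 = 1 := by rw [← hkR, h]; norm_num
        have hc1z : c1 = 0 := by linarith
        have hc2z : c2 = 0 := by linarith
        have hp1 : (p.1 : ℝ) = a := by rw [← h1, hc1z, hc3o]; ring
        have hp2 : (p.2 : ℝ) = b := by rw [← h2, hc2z, hc3o]; ring
        have : p.1 = a := by exact_mod_cast hp1
        have : p.2 = b := by exact_mod_cast hp2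
        exact Prod.ext (by assumption) (by assumption)
    · rintro (hp | rfl)
      · have hsub : ({((m : ℝ), (0 : ℝ)), ((0 : ℝ), (n : ℝ))} : Set (ℝ × ℝ)) ⊆
            {((m : ℝ), (0 : ℝ)), ((0 : ℝ), (n : ℝ)), latticeEmb (a, b)} := by
          intro x hx
          simp only [mem_insert_iff, mem_singleton_iff] at hx ⊢
          tauto
        have hp' : latticeEmb p ∈ convexHull ℝ ({((m : ℝ), (0 : ℝ)), ((0 : ℝ), (n : ℝ))} : Set (ℝ × ℝ)) := by
          rw [convexHull_pair]; exact hp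
        exact convexHull_mono hsub hp'
      · exact subset_convexHull ℝ _ (by simp)
  · -- unimodular affine image
    refine ⟨![![-M', a - (m : ℤ)], ![N', b]], ((m : ℤ), 0), Or.inl ?_, ?_⟩
    · erw [Matrix.det_fin_two]
      simp only [Matrix.cons_val', Matrix.cons_val_zero, Matrix.cons_val_one,
        Matrix.head_cons, Matrix.empty_val', Matrix.cons_val_fin_one, Matrix.head_fin_const]
      have hmZ : (m : ℤ) = M' * E := by rw [hM', hE]; exact_mod_cast hm'e.symm
      linear_combination (-1 : ℤ) * key + N' * hmZ
    · have hfun : (fun v : ℝ × ℝ =>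
            (((![![-M', a - (m : ℤ)], ![N', b]] : Matrix (Fin 2) (Fin 2) ℤ) 0 0 : ℝ) * v.1
              + ((![![-M', a - (m : ℤ)], ![N', b]] : Matrix (Fin 2) (Fin 2) ℤ) 0 1 : ℝ) * v.2
              + (((m : ℤ), (0:ℤ)).1 : ℝ),
             ((![![-M', a - (m : ℤ)], ![N', b]] : Matrix (Fin 2) (Fin 2) ℤ) 1 0 : ℝ) * v.1
              + ((![![-M', a - (m : ℤ)], ![N', b]] : Matrix (Fin 2) (Fin 2) ℤ) 1 1 : ℝ) * v.2
              + (((m : ℤ), (0:ℤ)).2 : ℝ)))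
          = ⇑(affPlane (-(m' : ℝ)) ((a : ℝ) - m) (n' : ℝ) (b : ℝ) (m : ℝ) 0) := by
        funext w
        simp only [affPlane, AffineMap.coe_mk, Matrix.cons_val', Matrix.cons_val_zero,
          Matrix.cons_val_one, Matrix.head_cons, Matrix.empty_val', Matrix.cons_val_fin_one,
          Matrix.head_fin_const]
        rw [Prod.ext_iff]
        constructor <;> push_cast [hN', hM', hE] <;> ring
      rw [hfun, AffineMap.image_convexHull, Set.image_insert_eq, Set.image_insert_eq,
        Set.image_singleton]
      have v0 : affPlane (-(m' : ℝ)) ((a : ℝ) - m) (n' : ℝ) (b : ℝ) (m : ℝ) 0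
          ((0:ℝ), (0:ℝ)) = ((m : ℝ), (0 : ℝ)) := by
        simp [affPlane]
      have v1 : affPlane (-(m' : ℝ)) ((a : ℝ) - m) (n' : ℝ) (b : ℝ) (m : ℝ) 0
          ((e:ℝ), (0:ℝ)) = ((0 : ℝ), (n : ℝ)) := by
        simp only [affPlane, AffineMap.coe_mk]
        rw [Prod.ext_iff]
        constructor <;> simp <;> linarith [hmr, hnr]
      have v2 : affPlane (-(m' : ℝ)) ((a : ℝ) - m) (n' : ℝ) (b : ℝ) (m : ℝ) 0
          ((0:ℝ), (1:ℝ)) = latticeEmb (a, b) := by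
        simp only [affPlane, AffineMap.coe_mk, latticeEmb]
        rw [Prod.ext_iff]
        constructor <;> simp
      rw [v0, v1, v2]
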